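/- Let k be a field, t₁,…,t_r indeterminates, and f(t₁,…,t_r, x) ∈ k[t₁,…,t_r][x] a polynomial, viewed as a one-variable polynomial in x, that is indecomposable in k(t₁,…,t_r)[x] and whose degree in x is prime to the characteristic of k. Then there is a proper Zariski closed subset Z ⊊ k̄^r such that for all (t₁*,…,t_r*) ∈ k̄^r ∖ Z, the specialized polynomial f(t₁*,…,t_r*, x) ∈ k̄[x] is indecomposable in k̄[x]. -/

import Mathlib

open Polynomial

/-- A one-variable polynomial over a field is indecomposable if it is non-constant and
cannot be written as `u ∘ g` with both `u` and `g` of degree at least 2. -/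
def IndecomposablePoly {K : Type*} [Field K] (f : K[X]) : Prop :=
  0 < f.natDegree ∧
    ¬ ∃ u g : K[X], 2 ≤ u.natDegree ∧ 2 ≤ g.natDegree ∧ f = u.comp g


section Aux
open Finset

section Digits
variable {R : Type*} [CommRing R] {S : Type*} [CommRing S]

/-- iterated base-`g` digits of `f` -/
noncomputable def pdig (g : R[X]) : R[X] → ℕ → R[X]
  | f, 0 => f %ₘ g
  | f, (k+1) => pdig g (f /ₘ g) k

@[simp] lemma pdig_zero (g f : R[X]) : pdig g f 0 = f %ₘ g := rfl
@[simp] lemma pdig_succ (g f : R[X]) (k : ℕ) : pdig g f (k+1) = pdig g (f /ₘ g) k := rfl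

lemma pdig_map (φ : R →+* S) {g : R[X]} (hg : g.Monic) (f : R[X]) (k : ℕ) :
    (pdig g f k).map φ = pdig (g.map φ) (f.map φ) k := by
  induction k generalizing f with
  | zero => simp [map_modByMonic φ hg]
  | succ k ih => simp [ih, map_divByMonic φ hg]

@[simp] lemma pdig_zero_poly (g : R[X]) (k : ℕ) : pdig g 0 k = 0 := by
  induction k with
  | zero => simp
  | succ k ih => simp [ih]

lemma pdig_expansion [Nontrivial R] {g : R[X]} (hg : g.Monic) (hg1 : 0 < g.natDegree) :
    ∀ (N : ℕ) (f : R[X]), f.natDegree < N * g.natDegree →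
      f = ∑ i ∈ range N, pdig g f i * g ^ i := by
  intro N
  induction N with
  | zero => intro f hf; simp at hf
  | succ N ih =>
    intro f hf
    by_cases h0 : f /ₘ g = 0
    · rw [Finset.sum_range_succ']
      simp only [pdig_succ, pdig_zero, pow_zero, mul_one, h0, pdig_zero_poly, zero_mul,
        Finset.sum_const_zero, zero_add]
      conv_lhs => rw [← modByMonic_add_div f g]
      rw [h0, mul_zero, add_zero]
    have hd : g.natDegree ≤ f.natDegree := by
      by_contra hlt
      push_neg at hlt
      exact h0 ((divByMonic_eq_zero_iff hg).mpr (degree_lt_degree hlt))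
    have hdiv : (f /ₘ g).natDegree < N * g.natDegree := by
      rw [natDegree_divByMonic f hg]
      have h2 : (N+1) * g.natDegree = N * g.natDegree + g.natDegree := by ring
      omega
    calc f = f %ₘ g + g * (f /ₘ g) := (modByMonic_add_div f g).symm
      _ = f %ₘ g + g * ∑ i ∈ range N, pdig g (f /ₘ g) i * g ^ i := by rw [← ih _ hdiv]
      _ = ∑ i ∈ range (N+1), pdig g f i * g ^ i := by
          rw [Finset.sum_range_succ', Finset.mul_sum]
          simp only [pdig_succ, pdig_zero, pow_zero, mul_one, pow_succ]
          rw [add_comm]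
          congr 1
          exact Finset.sum_congr rfl fun i _ => by ring
end Digits


section CompDigits
variable {R : Type*} [CommRing R] [Nontrivial R]

lemma comp_div_mod {g : R[X]} (hg : g.Monic) (hg1 : 0 < g.natDegree) (u : R[X]) :
    (u.comp g) /ₘ g = u.divX.comp g ∧ (u.comp g) %ₘ g = C (u.coeff 0) := by
  apply div_modByMonic_unique _ _ hg
  constructor
  · conv_rhs => rw [← X_mul_divX_add u]
    rw [add_comp, mul_comp, X_comp, C_comp]
    ring
  · refine lt_of_le_of_lt degree_C_le ?_
    exact natDegree_pos_iff_degree_pos.mp hg1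

lemma pdig_comp {g : R[X]} (hg : g.Monic) (hg1 : 0 < g.natDegree) (u : R[X]) (k : ℕ) :
    pdig g (u.comp g) k = C (u.coeff k) := by
  induction k generalizing u with
  | zero => simpa using (comp_div_mod hg hg1 u).2
  | succ k ih =>
    rw [pdig_succ, (comp_div_mod hg hg1 u).1, ih, coeff_divX]

end CompDigits

-- H5: top coefficients of a composition agree with those of C(lc u) * g^a
lemma coeff_comp_high {L : Type*} [CommRing L] (u g : L[X]) (hg : g.Monic)
    {a b : ℕ} (hgb : g.natDegree = b) (hua : u.natDegree ≤ a)
    {m : ℕ} (hm : a * b - b < m) :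
    (u.comp g).coeff m = (C (u.coeff a) * g ^ a).coeff m := by
  have hsum : u.comp g = ∑ i ∈ range (a + 1), C (u.coeff i) * g ^ i := by
    conv_lhs => rw [as_sum_range' u (a+1) (Nat.lt_succ_of_le hua)]
    rw [comp, eval₂_finset_sum]
    exact Finset.sum_congr rfl fun i _ => by rw [eval₂_monomial]
  rw [hsum, finset_sum_coeff, Finset.sum_range_succ]
  have hzero : ∀ i ∈ range a, (C (u.coeff i) * g ^ i).coeff m = 0 := by
    intro i hi
    rw [Finset.mem_range] at hi
    apply coeff_eq_zero_of_natDegree_lt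
    calc (C (u.coeff i) * g ^ i).natDegree ≤ (C (u.coeff i)).natDegree + (g ^ i).natDegree :=
          natDegree_mul_le
      _ ≤ 0 + i * b := by
          gcongr
          · exact Nat.le_of_eq (natDegree_C _)
          · exact (natDegree_pow_le).trans (by rw [hgb])
      _ ≤ (a - 1) * b := by
          have : i ≤ a - 1 := by omega
          simpa using Nat.mul_le_mul_right b this
      _ = a * b - b := by rw [Nat.sub_one_mul]
      _ < m := hm
  rw [Finset.sum_eq_zero hzero, zero_add]

-- L5: uniqueness of the normalized approximate root
lemma approx_root_unique {L : Type*} [Field L] {a b : ℕ} (ha : 0 < a)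
    (haL : (a : L) ≠ 0) {g h : L[X]} (hg : g.Monic) (hh : h.Monic)
    (hgb : g.natDegree = b) (hhb : h.natDegree = b) (h0 : g.coeff 0 = h.coeff 0)
    (hm : ∀ m, a * b - b < m → (g ^ a).coeff m = (h ^ a).coeff m) : g = h := by
  by_contra hne
  set D := g - h with hD
  have hD0 : D ≠ 0 := sub_ne_zero_of_ne hne
  have hgd : g.degree = (b : WithBot ℕ) := by rw [degree_eq_natDegree hg.ne_zero, hgb]
  have hhd : h.degree = (b : WithBot ℕ) := by rw [degree_eq_natDegree hh.ne_zero, hhb]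
  have hdeg : D.degree < g.degree := by
    apply degree_sub_lt (by rw [hgd, hhd]) hg.ne_zero
    rw [Monic.leadingCoeff hg, Monic.leadingCoeff hh]
  have hdb : D.natDegree < b := by
    rw [natDegree_lt_iff_degree_lt hD0]
    exact hdeg.trans_le hgd.le
  have hd1 : 0 < D.natDegree := by
    rcases Nat.eq_zero_or_pos D.natDegree with h'|h'
    · exfalso
      apply hD0
      rw [eq_C_of_natDegree_eq_zero h', hD, coeff_sub, h0, sub_self, map_zero]
    · exact h'
  -- the geometric-sum factor
  set s : L[X] := ∑ i ∈ range a, g ^ i * h ^ (a - 1 - i) with hs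
  have hfac : s * D = g ^ a - h ^ a := geom_sum₂_mul g h a
  set E := (a - 1) * b with hE
  have hterm : ∀ i ∈ range a, (g ^ i * h ^ (a - 1 - i)).natDegree = E ∧
      (g ^ i * h ^ (a - 1 - i)).coeff E = 1 := by
    intro i hi
    rw [Finset.mem_range] at hi
    have hmon : (g ^ i * h ^ (a - 1 - i)).Monic := (hg.pow i).mul (hh.pow _)
    have hnd : (g ^ i * h ^ (a - 1 - i)).natDegree = E := by
      rw [(hg.pow i).natDegree_mul (hh.pow _), natDegree_pow, natDegree_pow, hgb, hhb, hE]
      have h2 : i + (a - 1 - i) = a - 1 := by omega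
      calc i * b + (a - 1 - i) * b = (i + (a - 1 - i)) * b := by ring
        _ = (a - 1) * b := by rw [h2]
    refine ⟨hnd, ?_⟩
    have := hmon.coeff_natDegree
    rwa [hnd] at this
  have hsE : s.coeff E = (a : L) := by
    rw [hs, finset_sum_coeff]
    rw [Finset.sum_congr rfl (fun i hi => (hterm i hi).2)]
    simp
  have hsnd : s.natDegree = E := by
    apply le_antisymm
    · exact natDegree_sum_le_of_forall_le _ _ fun i hi => (hterm i hi).1.le
    · exact le_natDegree_of_ne_zero (by rw [hsE]; exact haL)
  have hs0 : s ≠ 0 := fun h' => haL (by rw [← hsE, h', coeff_zero])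
  have hkey : (s * D).natDegree = E + D.natDegree := by
    rw [natDegree_mul hs0 hD0, hsnd]
  have hlc : (s * D).coeff (E + D.natDegree) ≠ 0 := by
    rw [← hkey]
    exact fun h' => mul_ne_zero hs0 hD0 (leadingCoeff_eq_zero.mp h')
  apply hlc
  rw [hfac, coeff_sub, hm (E + D.natDegree) (by
    have hEe : E = a * b - b := by rw [hE, Nat.sub_one_mul]
    omega), sub_self]

-- H6: normalization of a decomposition over a field
lemma normalize_decomp {L : Type*} [Field L] {f u g : L[X]} {b : ℕ}
    (hb : 0 < b) (hgb : g.natDegree = b) (hcomp : f = u.comp g) :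
    ∃ u₁ g₁ : L[X], u₁.natDegree = u.natDegree ∧ g₁.Monic ∧ g₁.natDegree = b ∧
      g₁.coeff 0 = 0 ∧ f = u₁.comp g₁ := by
  have hg0 : g ≠ 0 := fun h => by simp [h] at hgb; omega
  set e := g.leadingCoeff with he
  have he0 : e ≠ 0 := leadingCoeff_ne_zero.mpr hg0
  set g₁ : L[X] := C e⁻¹ * (g - C (g.coeff 0)) with hg₁
  set u₁ : L[X] := u.comp (C e * X + C (g.coeff 0)) with hu₁
  have hgsub : (g - C (g.coeff 0)).natDegree = b := by rw [natDegree_sub_C, hgb]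
  have hg₁d : g₁.natDegree = b := by
    rw [hg₁, natDegree_C_mul (inv_ne_zero he0), hgsub]
  have hg₁monic : g₁.Monic := by
    have hcb : g₁.coeff b = 1 := by
      rw [hg₁, coeff_C_mul, coeff_sub, coeff_C, if_neg (by omega)]
      rw [sub_zero]
      have : g.coeff b = e := by rw [he, ← hgb, coeff_natDegree]
      rw [this, inv_mul_cancel₀ he0]
    unfold Monic leadingCoeff
    rw [hg₁d, hcb]
  have hrecover : (C e * X + C (g.coeff 0)).comp g₁ = g := by
    rw [add_comp, mul_comp, C_comp, C_comp, X_comp, hg₁]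
    rw [← mul_assoc, ← C_mul, mul_inv_cancel₀ he0, C_1, one_mul]
    ring
  refine ⟨u₁, g₁, ?_, hg₁monic, hg₁d, ?_, ?_⟩
  · rw [hu₁, natDegree_comp, natDegree_linear he0, mul_one]
  · rw [hg₁, coeff_C_mul, coeff_sub, coeff_C, if_pos rfl, sub_self, mul_zero]
  · rw [hu₁, comp_assoc, hrecover, hcomp]

-- coefficients of a perturbed power
lemma coeff_perturb_pow {A : Type*} [CommRing A] {Q : A[X]} {b : ℕ}
    (hQb : Q.natDegree = b) {a : ℕ} (ha : 0 < a) {E : ℕ} (hEb : E < b) (δ : A)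
    {m : ℕ} (hm : a * b - (b - E) ≤ m) :
    ((Q + monomial E δ) ^ a).coeff m =
      (Q ^ a).coeff m + (a : A) * δ * (Q ^ (a - 1)).coeff (m - E) := by
  obtain ⟨a', rfl⟩ : ∃ a', a = a' + 1 := ⟨a - 1, by omega⟩
  obtain ⟨u, hu1, rfl⟩ : ∃ u, 0 < u ∧ b = E + u := ⟨b - E, by omega, by omega⟩
  have hmE : E ≤ m := by
    have h1 : (a' + 1) * (E + u) = a' * (E + u) + E + u := by ring
    omega
  rw [add_pow, finset_sum_coeff, Finset.sum_range_succ, Finset.sum_range_succ]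
  have hlast : (Q ^ (a' + 1) * monomial E δ ^ (a' + 1 - (a' + 1)) *
      ((a' + 1).choose (a' + 1) : A[X])).coeff m = (Q ^ (a' + 1)).coeff m := by
    simp [Nat.choose_self]
  have hmid : (Q ^ a' * monomial E δ ^ (a' + 1 - a') *
      ((a' + 1).choose a' : A[X])).coeff m =
      ((a' + 1 : ℕ) : A) * δ * (Q ^ (a' + 1 - 1)).coeff (m - E) := by
    have h1 : a' + 1 - a' = 1 := by omega
    have h2 : (a' + 1).choose a' = a' + 1 := by
      exact Nat.choose_succ_self_right a'
    rw [h1, pow_one, h2]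
    rw [← C_eq_natCast, coeff_mul_C]
    have h3 : m = (m - E) + E := by omega
    rw [h3, coeff_mul_monomial]
    have h4 : a' + 1 - 1 = a' := by omega
    rw [h4]
    have h5 : m - E + E - E = m - E := by omega
    rw [h5]
    ring
  have hrest : ∀ t ∈ range a', (Q ^ t * monomial E δ ^ (a' + 1 - t) *
      ((a' + 1).choose t : A[X])).coeff m = 0 := by
    intro t ht
    rw [Finset.mem_range] at ht
    apply coeff_eq_zero_of_natDegree_lt
    set s := a' + 1 - t with hs
    have hs2 : 2 ≤ s := by omega
    have hts : t + s = a' + 1 := by omega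
    have hbound : (Q ^ t * monomial E δ ^ s * ((a' + 1).choose t : A[X])).natDegree ≤
        t * (E + u) + s * E := by
      calc (Q ^ t * monomial E δ ^ s * ((a' + 1).choose t : A[X])).natDegree
          ≤ (Q ^ t * monomial E δ ^ s).natDegree + (((a' + 1).choose t : A[X])).natDegree :=
            natDegree_mul_le
        _ ≤ (Q ^ t).natDegree + (monomial E δ ^ s).natDegree + 0 := by
            gcongr
            · exact natDegree_mul_le
            · rw [← C_eq_natCast]; exact (natDegree_C _).le
        _ ≤ t * (E + u) + s * E + 0 := by
            gcongr
            · exact natDegree_pow_le.trans (by rw [hQb])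
            · exact natDegree_pow_le.trans
                (Nat.mul_le_mul_left s (natDegree_monomial_le δ))
        _ = t * (E + u) + s * E := by omega
    have harith : t * (E + u) + s * E + 1 + u ≤ (t + s) * (E + u) := by nlinarith
    have hm' : (t + s) * (E + u) - u ≤ m := by
      rw [hts]
      have heq : (a' + 1) * (E + u) - (E + u - E) = (a' + 1) * (E + u) - u := by
        congr 1
        omega
      rw [← heq]
      exact hm
    omega
  rw [Finset.sum_eq_zero hrest, zero_add, hlast, hmid]
  push_cast
  ring

-- H3 : existence of the approximate a-th root
lemma exists_approxRoot {A : Type*} [CommRing A] [Nontrivial A] {a b : ℕ} (ha : 0 < a) (hb : 0 < b)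
    (c : A) (hu : IsUnit ((a : A) * c)) (fA : A[X]) :
    ∃ G : A[X], G.Monic ∧ G.natDegree = b ∧ G.coeff 0 = 0 ∧
      ∀ i, 0 < i → i < b → (C c * G ^ a).coeff (a * b - i) = fA.coeff (a * b - i) := by
  set e := Ring.inverse ((a : A) * c) with he
  set step : ℕ → A[X] := fun j => Nat.rec (X ^ b)
    (fun j Q => Q + monomial (b - (j + 1))
      ((fA.coeff (a * b - (j + 1)) - (C c * Q ^ a).coeff (a * b - (j + 1))) * e)) j with hstep
  have hstep0 : step 0 = X ^ b := rfl
  have hstepS : ∀ j, step (j + 1) = step j + monomial (b - (j + 1))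
      ((fA.coeff (a * b - (j + 1)) - (C c * (step j) ^ a).coeff (a * b - (j + 1))) * e) :=
    fun j => rfl
  have key : ∀ j, j < b → (step j).Monic ∧ (step j).natDegree = b ∧ (step j).coeff 0 = 0 ∧
      ∀ i, 0 < i → i ≤ j → (C c * (step j) ^ a).coeff (a * b - i) = fA.coeff (a * b - i) := by
    intro j
    induction j with
    | zero =>
      intro _
      refine ⟨monic_X_pow b, natDegree_X_pow b, ?_, fun i hi1 hi2 => by omega⟩
      rw [hstep0, coeff_X_pow, if_neg (by omega)]
    | succ j ih =>
      intro hjb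
      obtain ⟨hmon, hdeg, h0, hmatch⟩ := ih (by omega)
      set Q := step j
      set δ := (fA.coeff (a * b - (j + 1)) - (C c * Q ^ a).coeff (a * b - (j + 1))) * e with hδ
      set E := b - (j + 1) with hE
      have hEb : E < b := by omega
      have hE1 : 0 < E := by omega
      have hdlt : (monomial E δ).degree < Q.degree := by
        refine lt_of_le_of_lt (degree_monomial_le E δ) ?_
        rw [degree_eq_natDegree hmon.ne_zero, hdeg]
        exact_mod_cast hEb
      have hmon' : (step (j + 1)).Monic := by
        rw [hstepS j]
        exact hmon.add_of_left hdlt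
      have hdeg' : (step (j + 1)).natDegree = b := by
        rw [hstepS j]
        rw [natDegree_eq_of_degree_eq (degree_add_eq_left_of_degree_lt hdlt), hdeg]
      have h0' : (step (j + 1)).coeff 0 = 0 := by
        rw [hstepS j, coeff_add, h0, coeff_monomial, if_neg (by omega), add_zero]
      refine ⟨hmon', hdeg', h0', ?_⟩
      intro i hi1 hi2
      have hbE : b - E = j + 1 := by omega
      have hmge : a * b - (b - E) ≤ a * b - i := by omega
      have hperturb := coeff_perturb_pow hdeg ha hEb δ (m := a * b - i) hmge
      rw [hstepS j, coeff_C_mul, hperturb]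
      have hQpow : (Q ^ (a - 1)).natDegree = (a - 1) * b := by
        rw [hmon.natDegree_pow, hdeg]
      have habi : a * b - i - E = (a - 1) * b + (j + 1 - i) := by
        have h1 : a * b = (a - 1) * b + b := by
          have : a = (a - 1) + 1 := by omega
          calc a * b = ((a - 1) + 1) * b := by rw [← this]
            _ = (a - 1) * b + b := by ring
        omega
      rcases Nat.lt_or_ge j.succ i with hgt | hle2
      · omega
      rcases Nat.eq_or_lt_of_le hle2 with heq | hlt2
      · -- i = j + 1 : the newly matched coefficient
        have hie : i = j + 1 := by omega
        subst hie
        set i := j + 1 with hi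
        have hcoeffQ : (Q ^ (a - 1)).coeff (a * b - i - E) = 1 := by
          have h3 : a * b - i - E = (a - 1) * b := by omega
          rw [h3, ← hQpow]
          exact (hmon.pow (a - 1)).coeff_natDegree
        rw [hcoeffQ, mul_one, hδ]
        have hcancel : c * ((a : A) * ((fA.coeff (a * b - i) -
            (C c * Q ^ a).coeff (a * b - i)) * e)) =
            fA.coeff (a * b - i) - (C c * Q ^ a).coeff (a * b - i) := by
          rw [he]
          have h4 : c * ((a : A) * ((fA.coeff (a * b - i) -
              (C c * Q ^ a).coeff (a * b - i)) * Ring.inverse ((a : A) * c))) =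
              ((a : A) * c) * Ring.inverse ((a : A) * c) *
                (fA.coeff (a * b - i) - (C c * Q ^ a).coeff (a * b - i)) := by ring
          rw [h4, Ring.mul_inverse_cancel _ hu, one_mul]
        rw [mul_add, hcancel, coeff_C_mul]
        ring
      · -- i ≤ j : previously matched coefficients are untouched
        have hcoeffQ : (Q ^ (a - 1)).coeff (a * b - i - E) = 0 := by
          apply coeff_eq_zero_of_natDegree_lt
          rw [hQpow, habi]
          omega
        rw [hcoeffQ, mul_zero, add_zero, ← coeff_C_mul]
        exact hmatch i hi1 (by omega)
  obtain ⟨hmon, hdeg, h0, hmatch⟩ := key (b - 1) (by omega)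
  exact ⟨step (b - 1), hmon, hdeg, h0, fun i hi1 hi2 => hmatch i hi1 (by omega)⟩

universe u v

lemma keyLemma {k : Type u} [Field k] {r : ℕ}
    (f : Polynomial (MvPolynomial (Fin r) k))
    (hf : IndecomposablePoly (f.map (algebraMap (MvPolynomial (Fin r) k)
        (FractionRing (MvPolynomial (Fin r) k)))))
    {a b : ℕ} (ha : 2 ≤ a) (hb : 2 ≤ b) (hab : a * b = f.natDegree)
    (hak : (a : k) ≠ 0) :
    ∃ s : MvPolynomial (Fin r) k, s ≠ 0 ∧
      ∀ (K' : Type v) [Field K'] (φ : MvPolynomial (Fin r) k →+* K'),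
        φ f.leadingCoeff ≠ 0 → φ s ≠ 0 →
        ¬ ∃ u g : Polynomial K', u.natDegree = a ∧ g.natDegree = b ∧
          f.map φ = u.comp g := by
  classical
  set S := MvPolynomial (Fin r) k
  set F := FractionRing S
  have halgF : Function.Injective (algebraMap S F) := IsFractionRing.injective S F
  have hn : 0 < f.natDegree := by
    have := hf.1
    rwa [natDegree_map_eq_of_injective halgF] at this
  have hf0 : f ≠ 0 := fun h => by simp [h] at hn
  set c := f.leadingCoeff with hc
  have hc0 : c ≠ 0 := leadingCoeff_ne_zero.mpr hf0
  set A := Localization.Away c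
  haveI : IsDomain A :=
    IsLocalization.isDomain_localization (powers_le_nonZeroDivisors_of_noZeroDivisors hc0)
  set algSA : S →+* A := algebraMap S A with halgSA
  -- `a * c` is a unit in `A`
  have hcA : IsUnit (algSA c) := IsLocalization.Away.algebraMap_isUnit c
  have haA : IsUnit ((a : A)) := by
    have h1 : ((a : ℕ) : A) = algSA ((a : ℕ) : S) := (map_natCast algSA a).symm
    have h2 : ((a : ℕ) : S) = MvPolynomial.C ((a : ℕ) : k) :=
      (map_natCast (MvPolynomial.C : k →+* S) a).symm
    rw [h1, h2]
    exact ((isUnit_iff_ne_zero.mpr hak).map (MvPolynomial.C : k →+* S)).map algSA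
  have hacA : IsUnit ((a : A) * algSA c) := haA.mul hcA
  -- the map to the fraction field
  have hcF : IsUnit (algebraMap S F c) :=
    isUnit_iff_ne_zero.mpr ((map_ne_zero_iff _ halgF).mpr hc0)
  set ψ : A →+* F := IsLocalization.Away.lift c hcF with hψdef
  have hψ : ∀ x : S, ψ (algSA x) = algebraMap S F x := fun x =>
    IsLocalization.Away.lift_eq c hcF x
  set fA : A[X] := f.map algSA with hfA
  have hψcomp : ψ.comp algSA = algebraMap S F := RingHom.ext hψ
  have hMap : f.map (algebraMap S F) = fA.map ψ := by
    rw [hfA, Polynomial.map_map, hψcomp]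
  -- the approximate root
  obtain ⟨G, hGm, hGb, hG0, hGmatch⟩ :=
    exists_approxRoot (a := a) (b := b) (by omega) (by omega) (algSA c) hacA fA
  -- some base-G digit of f is non-constant over F
  have hconst : ¬ (∀ i, i ≤ a → ∀ j, j ≠ 0 → ψ ((pdig G fA i).coeff j) = 0) := by
    intro hall
    set Gψ : F[X] := G.map ψ with hGψ
    have hGψm : Gψ.Monic := hGm.map ψ
    have hGψb : Gψ.natDegree = b := by rw [hGψ, hGm.natDegree_map, hGb]
    set fF : F[X] := f.map (algebraMap S F) with hfF
    have hfFdeg : fF.natDegree = f.natDegree := natDegree_map_eq_of_injective halgF f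
    have hdig : ∀ i, i ≤ a → pdig Gψ fF i = C (ψ ((pdig G fA i).coeff 0)) := by
      intro i hi
      rw [hMap, hGψ, ← pdig_map ψ hGm]
      ext j
      rcases Nat.eq_zero_or_pos j with h0 | h0
      · rw [h0, coeff_map, coeff_C, if_pos rfl]
      · rw [coeff_map, coeff_C, if_neg (by omega)]
        exact hall i hi j (by omega)
    set U : F[X] := ∑ i ∈ range (a + 1), C (ψ ((pdig G fA i).coeff 0)) * X ^ i with hU
    have hUG : fF = U.comp Gψ := by
      have hexp : fF = ∑ i ∈ range (a + 1), pdig Gψ fF i * Gψ ^ i := by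
        apply pdig_expansion hGψm (by omega)
        rw [hfFdeg, hGψb, ← hab]
        have : (a + 1) * b = a * b + b := by ring
        omega
      rw [hU, comp, eval₂_finset_sum]
      rw [hexp]
      apply Finset.sum_congr rfl
      intro i hi
      rw [Finset.mem_range] at hi
      rw [hdig i (by omega)]
      simp [eval₂_mul, eval₂_C, eval₂_X_pow]
    have hUdeg : U.natDegree = a := by
      have h1 : fF.natDegree = U.natDegree * Gψ.natDegree := by rw [hUG, natDegree_comp]
      rw [hfFdeg, ← hab, hGψb] at h1
      exact (Nat.eq_of_mul_eq_mul_right (by omega) h1.symm)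
    exact hf.2 ⟨U, Gψ, by omega, by omega, hUG⟩
  push_neg at hconst
  obtain ⟨i, hia, j, hj0, hψne⟩ := hconst
  set q : A := (pdig G fA i).coeff j with hq
  obtain ⟨⟨s, mden⟩, hsm⟩ := IsLocalization.surj (M := Submonoid.powers c) q (S := A)
  have hmden0 : (mden : S) ≠ 0 := by
    obtain ⟨t, ht⟩ := mden.prop
    rw [← ht]
    exact pow_ne_zero t hc0
  have hs0 : s ≠ 0 := by
    intro h0
    apply hψne
    have h1 : ψ q * ψ (algSA (mden : S)) = ψ (algSA s) := by
      rw [← map_mul]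
      exact congrArg ψ hsm
    rw [hψ, hψ, h0, map_zero] at h1
    have h2 : algebraMap S F (mden : S) ≠ 0 := (map_ne_zero_iff _ halgF).mpr hmden0
    exact (mul_eq_zero.mp h1).resolve_right h2
  refine ⟨s, hs0, ?_⟩
  intro K' _ φ hφc hφs hdec
  obtain ⟨u, g, hua, hgb', hcomp⟩ := hdec
  have hφcu : IsUnit (φ c) := isUnit_iff_ne_zero.mpr hφc
  set φ' : A →+* K' := IsLocalization.Away.lift c hφcu with hφ'def
  have hφ' : ∀ x : S, φ' (algSA x) = φ x := fun x => IsLocalization.Away.lift_eq c hφcu x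
  -- φ' q ≠ 0
  have hφ'q : φ' q ≠ 0 := by
    intro h0
    apply hφs
    have h1 : φ' q * φ (mden : S) = φ s := by
      have := congrArg φ' hsm
      rwa [map_mul, hφ', hφ'] at this
    rw [h0, zero_mul] at h1
    exact h1.symm
  -- but all digits of the specialization are constants
  set fK : K'[X] := f.map φ with hfK
  have hφ'comp : φ'.comp algSA = φ := RingHom.ext hφ'
  have hfKA : fK = fA.map φ' := by
    rw [hfK, hfA, Polynomial.map_map, hφ'comp]
  have hfKdeg : fK.natDegree = f.natDegree := natDegree_map_of_leadingCoeff_ne_zero φ hφc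
  obtain ⟨u₁, g₁, hu₁a, hg₁m, hg₁b, hg₁0, hcomp₁⟩ :=
    normalize_decomp (f := fK) (by omega) hgb' hcomp
  rw [hua] at hu₁a
  set GK : K'[X] := G.map φ' with hGK
  have hGKm : GK.Monic := hGm.map φ'
  have hGKb : GK.natDegree = b := by rw [hGK, hGm.natDegree_map, hGb]
  have hGK0 : GK.coeff 0 = 0 := by rw [hGK, coeff_map, hG0, map_zero]
  have haK' : (a : K') ≠ 0 := by
    have h1 : ((a : ℕ) : K') = φ ((a : ℕ) : S) := (map_natCast φ a).symm
    have h2 : ((a : ℕ) : S) = MvPolynomial.C ((a : ℕ) : k) :=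
      (map_natCast (MvPolynomial.C : k →+* S) a).symm
    rw [h1, h2]
    exact (map_ne_zero_iff _ (φ.comp (MvPolynomial.C : k →+* S)).injective).mpr hak
  -- leading coefficients
  have hlcfK : fK.coeff (a * b) = φ c := by
    rw [hfK, coeff_map, hab, hc]
    rfl
  have hu₁top : u₁.coeff a = φ c := by
    have h1 : u₁.leadingCoeff = fK.leadingCoeff := by
      rw [hcomp₁, leadingCoeff_comp (by omega), hg₁m.leadingCoeff, one_pow, mul_one]
    have h2 : fK.leadingCoeff = φ c := by
      rw [leadingCoeff, hfKdeg, ← hab, hlcfK]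
    calc u₁.coeff a = u₁.leadingCoeff := by rw [leadingCoeff, hu₁a]
      _ = φ c := h1.trans h2
  -- top-coefficient matching for GK
  have hGKmatch : ∀ m, a * b - b < m → m < a * b →
      (C (φ c) * GK ^ a).coeff m = fK.coeff m := by
    intro m hm1 hm2
    have hi1 : 0 < a * b - m := by omega
    have hi2 : a * b - m < b := by
      have hba : b ≤ a * b := Nat.le_mul_of_pos_left b (by omega)
      omega
    have := hGmatch (a * b - m) hi1 hi2
    have hm' : a * b - (a * b - m) = m := by omega
    rw [hm'] at this
    have := congrArg φ' this
    rw [← coeff_map, ← coeff_map, Polynomial.map_mul, map_C, Polynomial.map_pow] at this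
    rw [hφ'] at this
    rw [← hGK, ← hfKA] at this
    exact this
  -- top-coefficient matching for g₁
  have hg₁match : ∀ m, a * b - b < m → fK.coeff m = (C (φ c) * g₁ ^ a).coeff m := by
    intro m hm1
    rw [hcomp₁, coeff_comp_high u₁ g₁ hg₁m hg₁b (le_of_eq hu₁a) hm1, hu₁top]
  -- uniqueness of the approximate root
  have huniq : g₁ = GK := by
    apply approx_root_unique (by omega : 0 < a) haK' hg₁m hGKm hg₁b hGKb
      (by rw [hg₁0, hGK0])
    intro m hm
    rcases Nat.lt_trichotomy m (a * b) with hlt | heq | hgt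
    · have h1 := hg₁match m hm
      have h2 := hGKmatch m hm hlt
      rw [coeff_C_mul] at h1 h2
      exact mul_left_cancel₀ hφc (h1.symm.trans h2.symm)
    · subst heq
      have e1 : (g₁ ^ a).natDegree = a * b := by rw [hg₁m.natDegree_pow, hg₁b]
      have e2 : (GK ^ a).natDegree = a * b := by rw [hGKm.natDegree_pow, hGKb]
      rw [← e1, (hg₁m.pow a).coeff_natDegree, e1, ← e2, (hGKm.pow a).coeff_natDegree]
    · rw [coeff_eq_zero_of_natDegree_lt (by rw [hg₁m.natDegree_pow, hg₁b]; omega),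
        coeff_eq_zero_of_natDegree_lt (by rw [hGKm.natDegree_pow, hGKb]; omega)]
  -- digits of the specialization are the coefficients of u₁
  have hdigK : (pdig G fA i).map φ' = C (u₁.coeff i) := by
    rw [pdig_map φ' hGm, ← hGK, ← hfKA]
    rw [hcomp₁, huniq]
    exact pdig_comp hGKm (by omega) u₁ i
  apply hφ'q
  have := congrArg (fun p => Polynomial.coeff p j) hdigK
  simp only [coeff_map] at this
  rw [this, coeff_C, if_neg hj0]

end Aux

/-- **Bertini–Noether for specializations of the parameters.** Let `k` be a field and
`f(t₁,…,t_r,x) ∈ k[t₁,…,t_r][x]`, viewed as a one-variable polynomial in `x`, be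
indecomposable in `k(t₁,…,t_r)[x]` with `deg_x f` prime to the characteristic of `k`. Then
there is a nonzero `Z ∈ k̄[t₁,…,t_r]` such that for every `(t₁*,…,t_r*) ∈ k̄^r` with
`Z(t₁*,…,t_r*) ≠ 0`, the specialized polynomial `f(t₁*,…,t_r*, x)` is indecomposable in
`k̄[x]`. -/
theorem specialization_of_parameters (k : Type*) [Field k] (r : ℕ)
    (f : Polynomial (MvPolynomial (Fin r) k))
    (hf : IndecomposablePoly
      (f.map (algebraMap (MvPolynomial (Fin r) k) (FractionRing (MvPolynomial (Fin r) k)))))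
    (hchar : ringChar k = 0 ∨ ¬ (ringChar k ∣ f.natDegree)) :
    ∃ Z : MvPolynomial (Fin r) (AlgebraicClosure k), Z ≠ 0 ∧
      ∀ ts : Fin r → AlgebraicClosure k, MvPolynomial.eval ts Z ≠ 0 →
        IndecomposablePoly
          (f.map (MvPolynomial.eval₂Hom (algebraMap k (AlgebraicClosure k)) ts)) := by
  classical
  set S := MvPolynomial (Fin r) k
  set K := AlgebraicClosure k
  set F := FractionRing S
  set n := f.natDegree with hn'
  have halgF : Function.Injective (algebraMap S F) := IsFractionRing.injective S F
  have hn : 0 < n := by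
    have := hf.1
    rwa [natDegree_map_eq_of_injective halgF] at this
  have hf0 : f ≠ 0 := fun h => by simp [hn', h] at hn
  set c := f.leadingCoeff with hc
  have hc0 : c ≠ 0 := leadingCoeff_ne_zero.mpr hf0
  have hcast : ∀ a' : ℕ, 2 ≤ a' → a' ∣ n → (a' : k) ≠ 0 := by
    intro a' h2 hdvd h0
    haveI hp : CharP k (ringChar k) := ringChar.charP k
    have hdvd' : ringChar k ∣ a' := (CharP.cast_eq_zero_iff k (ringChar k) a').mp h0
    rcases hchar with h | h
    · rw [h] at hdvd'
      have := Nat.eq_zero_of_zero_dvd hdvd'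
      omega
    · exact h (hdvd'.trans hdvd)
  set P : Finset (ℕ × ℕ) :=
    (Finset.range (n + 1) ×ˢ Finset.range (n + 1)).filter
      (fun p => p.1 * p.2 = n ∧ 2 ≤ p.1 ∧ 2 ≤ p.2) with hP
  have key' : ∀ p : ℕ × ℕ, ∃ s : S, s ≠ 0 ∧ (p ∈ P →
      ∀ (φ : S →+* K), φ c ≠ 0 → φ s ≠ 0 →
        ¬ ∃ u g : Polynomial K, u.natDegree = p.1 ∧ g.natDegree = p.2 ∧
          f.map φ = u.comp g) := by
    intro p
    by_cases hp : p ∈ P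
    · have hp' := hp
      rw [hP, Finset.mem_filter] at hp'
      obtain ⟨-, hmul, h2a, h2b⟩ := hp'
      obtain ⟨s, hs0, hs⟩ := keyLemma f hf h2a h2b hmul
        (hcast p.1 h2a ⟨p.2, hmul.symm⟩)
      exact ⟨s, hs0, fun _ φ => hs K φ⟩
    · exact ⟨1, one_ne_zero, fun h => absurd h hp⟩
  choose sfun hs0 hsP using key'
  set Z₀ : S := c * ∏ p ∈ P, sfun p with hZ₀def
  have hZ₀ : Z₀ ≠ 0 :=
    mul_ne_zero hc0 (Finset.prod_ne_zero_iff.mpr fun p _ => hs0 p)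
  refine ⟨MvPolynomial.map (algebraMap k K) Z₀, ?_, ?_⟩
  · intro h
    exact hZ₀ (MvPolynomial.map_injective _ (algebraMap k K).injective
      (by rw [h, map_zero]))
  intro ts hts
  set φ : S →+* K := MvPolynomial.eval₂Hom (algebraMap k K) ts with hφdef
  have heval : MvPolynomial.eval ts (MvPolynomial.map (algebraMap k K) Z₀) = φ Z₀ := by
    rw [MvPolynomial.eval_map]
    rfl
  rw [heval] at hts
  have hφc : φ c ≠ 0 := fun h => hts (by rw [hZ₀def, map_mul, h, zero_mul])
  have hφs : ∀ p ∈ P, φ (sfun p) ≠ 0 := by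
    intro p hp h0
    apply hts
    rw [hZ₀def, map_mul, map_prod]
    exact mul_eq_zero_of_right _ (Finset.prod_eq_zero hp h0)
  have hdeg : (f.map φ).natDegree = n := natDegree_map_of_leadingCoeff_ne_zero φ hφc
  constructor
  · omega
  rintro ⟨u, g, hu2, hg2, hcomp⟩
  set a := u.natDegree with ha
  set b := g.natDegree with hb
  have hab : a * b = n := by
    rw [← hdeg, hcomp, natDegree_comp]
  have hmemP : (a, b) ∈ P := by
    rw [hP, Finset.mem_filter, Finset.mem_product, Finset.mem_range, Finset.mem_range]
    refine ⟨⟨?_, ?_⟩, hab, hu2, hg2⟩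
    · have : a ≤ a * b := Nat.le_mul_of_pos_right a (by omega)
      omega
    · have : b ≤ a * b := Nat.le_mul_of_pos_left b (by omega)
      omega
  exact hsP (a, b) hmemP φ hφc (hφs _ hmemP) ⟨u, g, rfl, rfl, hcomp⟩
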